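/- Ergotropy, viewed as a function of the purifying unit vector, is Lipschitz continuous with Lipschitz constant 4‖H‖: for unit vectors ψ, φ in C^N ⊗ C^{N'}, |Erg(Tr_B|ψ⟩⟨ψ|) - Erg(Tr_B|φ⟩⟨φ|)| ≤ 4‖H‖·‖ψ - φ‖₂. -/

import Mathlib

open Matrix

/-- Reduced density matrix on the first factor of `ℂ^N ⊗ ℂ^{N'}`. -/
noncomputable def redDM {N N' : ℕ} (ψ : EuclideanSpace ℂ (Fin N × Fin N')) :
    Matrix (Fin N) (Fin N) ℂ :=
  fun i j => ∑ k : Fin N', ψ (i, k) * star (ψ (j, k))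

/-- Ergotropy: `Erg(ρ) = Tr[Hρ] - inf_{U ∈ U(N)} Tr[H U ρ U†]`. -/
noncomputable def erg {N : ℕ} (H ρ : Matrix (Fin N) (Fin N) ℂ) : ℝ :=
  ((H * ρ).trace).re -
    sInf {x : ℝ | ∃ U ∈ Matrix.unitaryGroup (Fin N) ℂ,
      x = ((H * (U * ρ * star U)).trace).re}

noncomputable section ErgAux

local notation "⟪" x ", " y "⟫" => @inner ℂ _ _ x y

def colv {N N' : ℕ} (ψ : EuclideanSpace ℂ (Fin N × Fin N')) (k : Fin N') :
    EuclideanSpace ℂ (Fin N) := WithLp.toLp 2 (fun i => ψ (i, k))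

-- quadratic form difference bound
lemma quad_diff {E : Type*} [NormedAddCommGroup E] [InnerProductSpace ℂ E]
    (A : E →L[ℂ] E) (x y : E) :
    ‖⟪x, A x⟫ - ⟪y, A y⟫‖ ≤ ‖A‖ * (‖x - y‖ * ‖x‖ + ‖y‖ * ‖x - y‖) := by
  have h : ⟪x, A x⟫ - ⟪y, A y⟫ = ⟪x - y, A x⟫ + ⟪y, A (x - y)⟫ := by
    rw [inner_sub_left, map_sub, inner_sub_right]; ring
  rw [h]
  calc ‖⟪x - y, A x⟫ + ⟪y, A (x - y)⟫‖ ≤ ‖⟪x - y, A x⟫‖ + ‖⟪y, A (x - y)⟫‖ := norm_add_le _ _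
    _ ≤ ‖x - y‖ * ‖A x‖ + ‖y‖ * ‖A (x - y)‖ := by
        gcongr <;> exact norm_inner_le_norm _ _
    _ ≤ ‖x - y‖ * (‖A‖ * ‖x‖) + ‖y‖ * (‖A‖ * ‖x - y‖) := by
        gcongr <;> exact A.le_opNorm _
    _ = ‖A‖ * (‖x - y‖ * ‖x‖ + ‖y‖ * ‖x - y‖) := by ring

lemma quad_bound {E : Type*} [NormedAddCommGroup E] [InnerProductSpace ℂ E]
    (A : E →L[ℂ] E) (x : E) : ‖⟪x, A x⟫‖ ≤ ‖A‖ * ‖x‖ ^ 2 := by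
  calc ‖⟪x, A x⟫‖ ≤ ‖x‖ * ‖A x‖ := norm_inner_le_norm _ _
    _ ≤ ‖x‖ * (‖A‖ * ‖x‖) := by gcongr; exact A.le_opNorm _
    _ = ‖A‖ * ‖x‖ ^ 2 := by ring

lemma norm_sq_decomp {N N' : ℕ} (ψ : EuclideanSpace ℂ (Fin N × Fin N')) :
    ∑ k, ‖colv ψ k‖ ^ 2 = ‖ψ‖ ^ 2 := by
  have h1 : ∀ k, ‖colv ψ k‖ ^ 2 = ∑ i, ‖ψ (i, k)‖ ^ 2 := by
    intro k
    rw [EuclideanSpace.norm_eq, Real.sq_sqrt (by positivity)]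
    rfl
  have h2 : ‖ψ‖ ^ 2 = ∑ p : Fin N × Fin N', ‖ψ p‖ ^ 2 := by
    rw [EuclideanSpace.norm_eq, Real.sq_sqrt (by positivity)]
  simp only [h1, h2, Fintype.sum_prod_type]
  exact Finset.sum_comm

lemma trace_formula {N N' : ℕ} (M : Matrix (Fin N) (Fin N) ℂ)
    (ψ : EuclideanSpace ℂ (Fin N × Fin N')) :
    (M * redDM ψ).trace = ∑ k, ⟪colv ψ k, Matrix.toEuclideanCLM (𝕜 := ℂ) M (colv ψ k)⟫ := by
  have hA : ∀ (x : EuclideanSpace ℂ (Fin N)) i,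
      (Matrix.toEuclideanCLM (𝕜 := ℂ) M) x i = ∑ j, M i j * x j := fun _ _ => rfl
  simp only [Matrix.trace, Matrix.diag_apply, Matrix.mul_apply, redDM, PiLp.inner_apply,
    RCLike.inner_apply, hA, colv]
  have hm : ∀ (i j : Fin N), M i j * (∑ k : Fin N', ψ (j,k) * star (ψ (i,k)))
      = ∑ k : Fin N', M i j * (ψ (j,k) * star (ψ (i,k))) := fun i j => Finset.mul_sum _ _ _
  have hm2 : ∀ (k : Fin N') (i : Fin N), (starRingEnd ℂ) (ψ (i,k)) * (∑ j : Fin N, M i j * ψ (j,k))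
      = ∑ j : Fin N, (starRingEnd ℂ) (ψ (i,k)) * (M i j * ψ (j,k)) := fun k i => Finset.mul_sum _ _ _
  simp only [hm, hm2]
  refine Eq.trans (Finset.sum_congr rfl fun i _ => Finset.sum_comm) ?_
  refine Eq.trans Finset.sum_comm ?_
  refine Finset.sum_congr rfl fun k _ => Finset.sum_congr rfl fun i _ => ?_
  rw [Finset.sum_mul]
  refine Finset.sum_congr rfl fun j _ => ?_
  simp only [starRingEnd_apply]
  ring

lemma trace_diff {N N' : ℕ} (M : Matrix (Fin N) (Fin N) ℂ)
    (ψ φ : EuclideanSpace ℂ (Fin N × Fin N')) :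
    |((M * redDM ψ).trace).re - ((M * redDM φ).trace).re| ≤
      ‖Matrix.toEuclideanCLM (𝕜 := ℂ) M‖ * ((‖ψ‖ + ‖φ‖) * ‖ψ - φ‖) := by
  set A := Matrix.toEuclideanCLM (𝕜 := ℂ) M with hAdef
  rw [trace_formula, trace_formula]
  rw [← Complex.sub_re, ← Finset.sum_sub_distrib]
  have cs1 : ∑ k, ‖colv (ψ - φ) k‖ * ‖colv ψ k‖ ≤ ‖ψ - φ‖ * ‖ψ‖ := by
    have h := Real.sum_mul_le_sqrt_mul_sqrt Finset.univ
      (fun k => ‖colv (ψ - φ) k‖) (fun k => ‖colv ψ k‖)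
    rwa [norm_sq_decomp, norm_sq_decomp, Real.sqrt_sq (norm_nonneg _),
      Real.sqrt_sq (norm_nonneg _)] at h
  have cs2 : ∑ k, ‖colv φ k‖ * ‖colv (ψ - φ) k‖ ≤ ‖φ‖ * ‖ψ - φ‖ := by
    have h := Real.sum_mul_le_sqrt_mul_sqrt Finset.univ
      (fun k => ‖colv φ k‖) (fun k => ‖colv (ψ - φ) k‖)
    rwa [norm_sq_decomp, norm_sq_decomp, Real.sqrt_sq (norm_nonneg _),
      Real.sqrt_sq (norm_nonneg _)] at h
  calc |(∑ k, (⟪colv ψ k, A (colv ψ k)⟫ - ⟪colv φ k, A (colv φ k)⟫)).re|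
      ≤ ‖∑ k, (⟪colv ψ k, A (colv ψ k)⟫ - ⟪colv φ k, A (colv φ k)⟫)‖ :=
        Complex.abs_re_le_norm _
    _ ≤ ∑ k, ‖⟪colv ψ k, A (colv ψ k)⟫ - ⟪colv φ k, A (colv φ k)⟫‖ := norm_sum_le _ _
    _ ≤ ∑ k, ‖A‖ * (‖colv (ψ - φ) k‖ * ‖colv ψ k‖ + ‖colv φ k‖ * ‖colv (ψ - φ) k‖) := by
        refine Finset.sum_le_sum fun k _ => ?_
        have := quad_diff A (colv ψ k) (colv φ k)
        have hc : colv ψ k - colv φ k = colv (ψ - φ) k := rfl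
        rwa [hc] at this
    _ = ‖A‖ * ((∑ k, ‖colv (ψ - φ) k‖ * ‖colv ψ k‖) + ∑ k, ‖colv φ k‖ * ‖colv (ψ - φ) k‖) := by
        rw [← Finset.mul_sum, Finset.sum_add_distrib]
    _ ≤ ‖A‖ * (‖ψ - φ‖ * ‖ψ‖ + ‖φ‖ * ‖ψ - φ‖) := by
        gcongr
    _ = ‖A‖ * ((‖ψ‖ + ‖φ‖) * ‖ψ - φ‖) := by ring

lemma trace_bound {N N' : ℕ} (M : Matrix (Fin N) (Fin N) ℂ)
    (ψ : EuclideanSpace ℂ (Fin N × Fin N')) :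
    |((M * redDM ψ).trace).re| ≤ ‖Matrix.toEuclideanCLM (𝕜 := ℂ) M‖ * ‖ψ‖ ^ 2 := by
  set A := Matrix.toEuclideanCLM (𝕜 := ℂ) M with hAdef
  rw [trace_formula]
  calc |(∑ k, ⟪colv ψ k, A (colv ψ k)⟫).re| ≤ ‖∑ k, ⟪colv ψ k, A (colv ψ k)⟫‖ :=
        Complex.abs_re_le_norm _
    _ ≤ ∑ k, ‖⟪colv ψ k, A (colv ψ k)⟫‖ := norm_sum_le _ _
    _ ≤ ∑ k, ‖A‖ * ‖colv ψ k‖ ^ 2 := Finset.sum_le_sum fun k _ => quad_bound A _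
    _ = ‖A‖ * ‖ψ‖ ^ 2 := by rw [← Finset.mul_sum, norm_sq_decomp]

lemma conj_norm {N : ℕ} (H U : Matrix (Fin N) (Fin N) ℂ)
    (hU : U ∈ Matrix.unitaryGroup (Fin N) ℂ) :
    ‖Matrix.toEuclideanCLM (𝕜 := ℂ) (star U * H * U)‖ =
      ‖Matrix.toEuclideanCLM (𝕜 := ℂ) H‖ := by
  have hV : (Matrix.toEuclideanCLM (𝕜 := ℂ) U) ∈
      unitary (EuclideanSpace ℂ (Fin N) →L[ℂ] EuclideanSpace ℂ (Fin N)) := by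
    constructor
    · rw [← map_star, ← _root_.map_mul, hU.1, _root_.map_one]
    · rw [← map_star, ← _root_.map_mul, hU.2, _root_.map_one]
  rw [_root_.map_mul, _root_.map_mul, map_star, mul_assoc]
  rw [CStarRing.norm_mem_unitary_mul _ (Unitary.star_mem hV), CStarRing.norm_mul_mem_unitary _ hV]

lemma cyc {N : ℕ} (H U ρ : Matrix (Fin N) (Fin N) ℂ) :
    (H * (U * ρ * star U)).trace = ((star U * H * U) * ρ).trace := by
  have h1 : H * (U * ρ * star U) = (H * U * ρ) * star U := by
    simp only [mul_assoc]
  rw [h1, Matrix.trace_mul_comm]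
  congr 1
  simp only [mul_assoc]

lemma inf_le_inf_add {N N' : ℕ} (H : Matrix (Fin N) (Fin N) ℂ)
    (ψ φ : EuclideanSpace ℂ (Fin N × Fin N')) (hψ : ‖ψ‖ = 1) (hφ : ‖φ‖ = 1) :
    sInf {x : ℝ | ∃ U ∈ Matrix.unitaryGroup (Fin N) ℂ,
        x = ((H * (U * redDM ψ * star U)).trace).re} ≤
      sInf {x : ℝ | ∃ U ∈ Matrix.unitaryGroup (Fin N) ℂ,
        x = ((H * (U * redDM φ * star U)).trace).re} +
      ‖Matrix.toEuclideanCLM (𝕜 := ℂ) H‖ * (2 * ‖ψ - φ‖) := by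
  set a := ‖Matrix.toEuclideanCLM (𝕜 := ℂ) H‖ with ha
  set Sψ := {x : ℝ | ∃ U ∈ Matrix.unitaryGroup (Fin N) ℂ,
      x = ((H * (U * redDM ψ * star U)).trace).re} with hSψ
  set Sφ := {x : ℝ | ∃ U ∈ Matrix.unitaryGroup (Fin N) ℂ,
      x = ((H * (U * redDM φ * star U)).trace).re} with hSφ
  have hne : Sφ.Nonempty := ⟨_, 1, one_mem _, rfl⟩
  have hbdd : BddBelow Sψ := by
    refine ⟨-a, fun x hx => ?_⟩
    obtain ⟨U, hU, rfl⟩ := hx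
    rw [cyc]
    have := trace_bound (star U * H * U) ψ
    rw [conj_norm H U hU, hψ] at this
    have h2 := (abs_le.mp this).1
    rw [one_pow, mul_one] at h2
    exact h2
  rw [← sub_le_iff_le_add]
  refine le_csInf hne fun x hx => ?_
  obtain ⟨U, hU, rfl⟩ := hx
  rw [sub_le_iff_le_add]
  have hy : ((H * (U * redDM ψ * star U)).trace).re ∈ Sψ := ⟨U, hU, rfl⟩
  refine (csInf_le hbdd hy).trans ?_
  have hd := trace_diff (star U * H * U) ψ φ
  rw [conj_norm H U hU, hψ, hφ] at hd
  rw [cyc, cyc H U (redDM φ)]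
  have := (abs_le.mp hd).2
  linarith

/-- Ergotropy, as a function of the purifying unit vector, is Lipschitz
continuous with Lipschitz constant `4‖H‖`. -/
theorem erg_lipschitz {N N' : ℕ} (H : Matrix (Fin N) (Fin N) ℂ)
    (hH : H.IsHermitian) (ψ φ : EuclideanSpace ℂ (Fin N × Fin N'))
    (hψ : ‖ψ‖ = 1) (hφ : ‖φ‖ = 1) :
    |erg H (redDM ψ) - erg H (redDM φ)| ≤
      4 * ‖Matrix.toEuclideanCLM (𝕜 := ℂ) H‖ * ‖ψ - φ‖ := by
  set a := ‖Matrix.toEuclideanCLM (𝕜 := ℂ) H‖ with ha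
  have htr := trace_diff H ψ φ
  rw [hψ, hφ] at htr
  have hI1 := inf_le_inf_add H ψ φ hψ hφ
  have hI2 := inf_le_inf_add H φ ψ hφ hψ
  rw [show φ - ψ = -(ψ - φ) by abel, norm_neg] at hI2
  rw [erg, erg]
  have h1 := (abs_le.mp htr).1
  have h2 := (abs_le.mp htr).2
  rw [abs_le]
  constructor <;> [skip; skip] <;> nlinarith [norm_nonneg (ψ - φ), norm_nonneg (Matrix.toEuclideanCLM (𝕜 := ℂ) H)]

end ErgAux
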